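/- Let p be an odd prime and r an integer with 1 \le r \le (p-1)/2. If p + 1 - 2r \equiv 0 (mod 4), then \sum_{k=0}^{(p-1)/2} \binom{2k}{k}^2 / 32^k \cdot k(k-1)\cdots(k-r+1) \equiv 0 \pmod{p^2}. If p - 1 - 2r \equiv 0 (mod 4), then this sum is congruent to (-1)^{(p-1+2r)/4} 2^{-(p-1)/2} ((p-1)/2 + r)! / ( ((p-1-2r)/4)! \cdot ((p-1+2r)/4)! ) mod p^2. -/

import Mathlib

open Finset

/-- `a ≡ b (mod p^k)` as rationals: `a - b` is `p^k` times a `p`-integral rational. -/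
def ratCongr (p k : ℕ) (a b : ℚ) : Prop :=
  ∃ c : ℚ, a - b = (p : ℚ) ^ k * c ∧ ¬ (p ∣ c.den)

/-- rising factorial (Pochhammer) over ℚ -/
def pch (x : ℚ) : ℕ → ℚ
  | 0 => 1
  | N + 1 => pch x N * (x + N)

lemma pch_zero (x : ℚ) : pch x 0 = 1 := rfl
lemma pch_succ (x : ℚ) (N : ℕ) : pch x (N + 1) = pch x N * (x + N) := rfl

lemma pch_succ_left (x : ℚ) (N : ℕ) : pch x (N + 1) = x * pch (x + 1) N := by
  induction N with
  | zero => simp [pch]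
  | succ M ih =>
      rw [pch_succ, ih, pch_succ]
      push_cast
      ring

lemma pch_pos {x : ℚ} (hx : 0 < x) (N : ℕ) : 0 < pch x N := by
  induction N with
  | zero => norm_num [pch]
  | succ M ih =>
      rw [pch_succ]
      exact mul_pos ih (by positivity)

lemma pch_ne_zero {x : ℚ} (hx : 0 < x) (N : ℕ) : pch x N ≠ 0 := (pch_pos hx N).ne'

lemma pch_eq_prod (x : ℚ) (N : ℕ) : pch x N = ∏ i ∈ range N, (x + i) := by
  induction N with
  | zero => simp [pch]
  | succ M ih => rw [pch_succ, ih, prod_range_succ]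

lemma pch_neg_nat (m N : ℕ) (h : m < N) : pch (-(m : ℚ)) N = 0 := by
  rw [pch_eq_prod]
  exact Finset.prod_eq_zero (Finset.mem_range.mpr h) (by push_cast; ring)

lemma pch_nat_factorial (r : ℕ) (N : ℕ) :
    pch ((r : ℚ) + 1) N = ((r + N).factorial : ℚ) / (r.factorial : ℚ) := by
  induction N with
  | zero =>
      have : (r.factorial : ℚ) ≠ 0 := by positivity
      simp [pch, div_self this]
  | succ M ih =>
      rw [pch_succ, ih]
      have e1 : ((r + (M + 1)).factorial : ℚ) = ((r : ℚ) + M + 1) * ((r + M).factorial : ℚ) := by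
        have h1 : r + (M + 1) = (r + M) + 1 := by ring
        rw [h1, Nat.factorial_succ]; push_cast; ring
      rw [e1]
      have h2 : (r.factorial : ℚ) ≠ 0 := by positivity
      field_simp
      ring

lemma pch_half (k : ℕ) :
    pch (2⁻¹ : ℚ) k = ((2 * k).factorial : ℚ) / (4 ^ k * k.factorial) := by
  induction k with
  | zero => simp [pch]
  | succ M ih =>
      rw [pch_succ, ih]
      have e1 : ((2 * (M + 1)).factorial : ℚ) = (2 * (M : ℚ) + 2) * (2 * M + 1) * ((2 * M).factorial : ℚ) := by
        have h1 : 2 * (M + 1) = (2 * M + 1) + 1 := by ring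
        rw [h1, Nat.factorial_succ, Nat.factorial_succ]; push_cast; ring
      have e2 : (((M + 1)).factorial : ℚ) = ((M : ℚ) + 1) * (M.factorial : ℚ) := by
        rw [Nat.factorial_succ]; push_cast; ring
      rw [e1, e2]
      have h2 : (M.factorial : ℚ) ≠ 0 := by positivity
      field_simp
      ring

lemma pch_add (x : ℚ) (a b : ℕ) : pch x (a + b) = pch x a * pch (x + a) b := by
  induction b with
  | zero => simp [pch]
  | succ M ih =>
      have : a + (M + 1) = (a + M) + 1 := by ring
      rw [this, pch_succ, ih, pch_succ]
      push_cast
      ring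

section scratch
variable (p : ℕ)

/-- rationals with denominator a power of two -/
def Dy (x : ℚ) : Prop := ∃ (a : ℤ) (m : ℕ), x * 2 ^ m = a

lemma Dy_int (a : ℤ) : Dy (a : ℚ) := ⟨a, 0, by norm_num⟩
lemma Dy_nat (a : ℕ) : Dy (a : ℚ) := ⟨a, 0, by norm_num⟩
lemma Dy_add {x y : ℚ} (hx : Dy x) (hy : Dy y) : Dy (x + y) := by
  obtain ⟨a, m, ha⟩ := hx
  obtain ⟨b, k, hb⟩ := hy
  exact ⟨a * 2 ^ k + b * 2 ^ m, m + k, by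
    push_cast; rw [pow_add]; linear_combination (2 ^ k : ℚ) * ha + (2 ^ m : ℚ) * hb⟩
lemma Dy_mul {x y : ℚ} (hx : Dy x) (hy : Dy y) : Dy (x * y) := by
  obtain ⟨a, m, ha⟩ := hx
  obtain ⟨b, k, hb⟩ := hy
  exact ⟨a * b, m + k, by
    push_cast; rw [pow_add]; linear_combination (y * 2 ^ k : ℚ) * ha + (a : ℚ) * hb⟩
lemma Dy_neg {x : ℚ} (hx : Dy x) : Dy (-x) := by
  obtain ⟨a, m, ha⟩ := hx
  exact ⟨-a, m, by push_cast; linear_combination -ha⟩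
lemma Dy_half {x : ℚ} (hx : Dy x) : Dy (x / 2) := by
  obtain ⟨a, m, ha⟩ := hx
  exact ⟨a, m + 1, by rw [pow_add]; push_cast; linear_combination ha⟩
lemma Dy_quarter {x : ℚ} (hx : Dy x) : Dy (x / 4) := by
  obtain ⟨a, m, ha⟩ := hx
  exact ⟨a, m + 2, by rw [pow_add]; push_cast; linear_combination ha⟩

lemma Dy_pch {x : ℚ} (hx : Dy x) (N : ℕ) : Dy (pch x N) := by
  induction N with
  | zero => exact ⟨1, 0, by norm_num [pch]⟩
  | succ M ih => exact Dy_mul ih (Dy_add hx (Dy_nat M))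

/-- `p`-integral rationals -/
def IsG (x : ℚ) : Prop := ∃ (a b : ℤ), b ≠ 0 ∧ ¬ ((p : ℤ) ∣ b) ∧ x * b = a

variable {p}

lemma IsG_add (hp : p.Prime) {x y : ℚ} (hx : IsG p x) (hy : IsG p y) : IsG p (x + y) := by
  obtain ⟨a, b, hb0, hbd, hab⟩ := hx
  obtain ⟨c, d, hd0, hdd, hcd⟩ := hy
  refine ⟨a * d + c * b, b * d, mul_ne_zero hb0 hd0, ?_, by
    push_cast; linear_combination (d : ℚ) * hab + (b : ℚ) * hcd⟩
  intro h
  rcases (Int.Prime.dvd_mul' (by exact_mod_cast hp) h) with h' | h'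
  · exact hbd h'
  · exact hdd h'

lemma IsG_mul (hp : p.Prime) {x y : ℚ} (hx : IsG p x) (hy : IsG p y) : IsG p (x * y) := by
  obtain ⟨a, b, hb0, hbd, hab⟩ := hx
  obtain ⟨c, d, hd0, hdd, hcd⟩ := hy
  refine ⟨a * c, b * d, mul_ne_zero hb0 hd0, ?_, by
    push_cast; linear_combination (y * d : ℚ) * hab + (a : ℚ) * hcd⟩
  intro h
  rcases (Int.Prime.dvd_mul' (by exact_mod_cast hp) h) with h' | h'
  · exact hbd h'
  · exact hdd h'

lemma IsG_neg {x : ℚ} (hx : IsG p x) : IsG p (-x) := by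
  obtain ⟨a, b, hb0, hbd, hab⟩ := hx
  exact ⟨-a, b, hb0, hbd, by push_cast; linear_combination -hab⟩

lemma not_dvd_one_int (hp : p.Prime) : ¬ ((p : ℤ) ∣ 1) := by
  intro h
  have h1 := Int.le_of_dvd one_pos h
  have h2 := hp.two_le
  omega

lemma IsG_zero (hp : p.Prime) : IsG p 0 :=
  ⟨0, 1, one_ne_zero, not_dvd_one_int hp, by norm_num⟩

lemma IsG_of_Dy (hp : p.Prime) (hodd : p ≠ 2) {x : ℚ} (hx : Dy x) : IsG p x := by
  obtain ⟨a, m, ha⟩ := hx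
  refine ⟨a, 2 ^ m, by positivity, ?_, by exact_mod_cast ha⟩
  intro h
  have h2 : p ∣ 2 ^ m := by exact_mod_cast h
  have h3 := hp.dvd_of_dvd_pow h2
  exact hodd ((Nat.prime_dvd_prime_iff_eq hp Nat.prime_two).mp h3)

lemma IsG_int (hp : p.Prime) (a : ℤ) : IsG p (a : ℚ) :=
  ⟨a, 1, one_ne_zero, not_dvd_one_int hp, by norm_num⟩

/-- inverse of factorial of small number -/
lemma IsG_inv_factorial (hp : p.Prime) {m : ℕ} (hm : m < p) : IsG p ((m.factorial : ℚ)⁻¹) := by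
  refine ⟨1, m.factorial, by positivity, ?_, by
    have : (m.factorial : ℚ) ≠ 0 := by positivity
    push_cast
    field_simp⟩
  intro h
  have h2 : p ∣ m.factorial := by exact_mod_cast h
  exact absurd ((Nat.Prime.dvd_factorial hp).mp h2) (by omega)

lemma IsG_inv_pow2 (hp : p.Prime) (hodd : p ≠ 2) (m : ℕ) : IsG p (((2 : ℚ) ^ m)⁻¹) := by
  apply IsG_of_Dy hp hodd
  exact ⟨1, m, by field_simp; norm_num⟩

lemma IsG_den {x : ℚ} (hx : IsG p x) : ¬ (p ∣ x.den) := by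
  obtain ⟨a, b, hb0, hbd, hab⟩ := hx
  intro hden
  apply hbd
  have hx' : x = (a : ℚ) / (b : ℚ) := by
    field_simp
    linear_combination hab
  have hdvd : ((Rat.divInt a b).den : ℤ) ∣ b := Rat.den_dvd a b
  rw [Rat.divInt_eq_div] at hdvd
  rw [← hx'] at hdvd
  exact dvd_trans (by exact_mod_cast hden) hdvd

end scratch
/-- key quadratic congruence: `(c+y)_N ^ 2 - (c)_N (c+2y)_N` is `4 y^2` times a dyadic -/
lemma Dlemma {c y : ℚ} (hc : Dy c) (hy : Dy y) (N : ℕ) :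
    ∃ q : ℚ, Dy q ∧ pch (c + y) N ^ 2 - pch c N * pch (c + 2 * y) N = 4 * y ^ 2 * q := by
  induction N with
  | zero => exact ⟨0, ⟨0, 0, by norm_num⟩, by norm_num [pch]⟩
  | succ M ih =>
      obtain ⟨q, hq, hqe⟩ := ih
      refine ⟨(c + y + M) ^ 2 * q + pch c M * pch (c + 2 * y) M / 4, ?_, ?_⟩
      · have hcyM : Dy (c + y + (M : ℚ)) := Dy_add (Dy_add hc hy) (Dy_nat M)
        have hsq : Dy ((c + y + (M : ℚ)) ^ 2) := by
          have := Dy_mul hcyM hcyM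
          simpa [sq] using this
        have h2y : Dy (c + 2 * y) := by
          have := Dy_add hc (Dy_add hy hy)
          simpa [two_mul] using this
        exact Dy_add (Dy_mul hsq hq)
          (Dy_quarter (Dy_mul (Dy_pch hc M) (Dy_pch h2y M)))
      · rw [pch_succ, pch_succ, pch_succ]
        have h4 : (4 : ℚ) ≠ 0 := by norm_num
        linear_combination ((c + y + (M : ℚ)) ^ 2) * hqe
set_option maxHeartbeats 1600000 in
/-- the hypergeometric summand -/
noncomputable def FF (r : ℕ) (x : ℚ) (N : ℕ) : ℚ :=
  pch (-x) N * pch (x + 2 * r + 1) N / (pch ((r : ℚ) + 1) N * (N.factorial : ℚ) * 2 ^ N)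

lemma FF_zero (r : ℕ) (x : ℚ) : FF r x 0 = 1 := by simp [FF, pch]

set_option maxHeartbeats 1600000 in
lemma key_rec (r : ℕ) (x : ℚ) (hx1 : x + 1 ≠ 0) (hx2 : x + 2 * r + 2 ≠ 0) (M : ℕ) :
    (x + 2 * r + 2) * FF r (x + 2) (M + 1) + (x + 1) * FF r x (M + 1)
      + (2 * x + 2 * r + 3) * FF r (x + 1) M
    = (2 * x + 2 * r + 3) * FF r (x + 1) (M + 1) := by
  obtain ⟨a, ha⟩ : ∃ a, pch (-(x + 1)) M = a := ⟨_, rfl⟩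
  obtain ⟨b, hb⟩ : ∃ b, pch (x + 2 * r + 2) M = b := ⟨_, rfl⟩
  -- A1 : pch (-(x+2)) (M+1) = -(x+2) * a
  have A1 : pch (-(x + 2)) (M + 1) = -(x + 2) * a := by
    rw [pch_succ_left, show (-(x + 2) + 1 : ℚ) = -(x + 1) from by ring, ha]
  -- A2 : (x+2r+2) * pch ((x+2)+2r+1) (M+1) = b * (x+2r+2+M) * (x+2r+3+M)
  have A2 : (x + 2 * r + 2) * pch ((x + 2) + 2 * r + 1) (M + 1)
      = b * (x + 2 * r + 2 + M) * (x + 2 * r + 3 + M) := by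
    have h1 : pch ((x + 2) + 2 * r + 1) (M + 1)
        = pch (x + 2 * r + 3) M * (x + 2 * r + 3 + M) := by
      rw [show ((x + 2) + 2 * r + 1 : ℚ) = x + 2 * r + 3 from by ring, pch_succ]; all_goals ring
    have h2 : pch (x + 2 * r + 2) (M + 1) = (x + 2 * r + 2) * pch (x + 2 * r + 3) M := by
      rw [pch_succ_left, show (x + 2 * r + 2 + 1 : ℚ) = x + 2 * r + 3 from by ring]
    have h3 : pch (x + 2 * r + 2) (M + 1) = b * (x + 2 * r + 2 + M) := by
      rw [pch_succ, hb]; all_goals ring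
    rw [h1]
    calc (x + 2 * r + 2) * (pch (x + 2 * r + 3) M * (x + 2 * r + 3 + M))
        = ((x + 2 * r + 2) * pch (x + 2 * r + 3) M) * (x + 2 * r + 3 + M) := by ring
      _ = (b * (x + 2 * r + 2 + M)) * (x + 2 * r + 3 + M) := by rw [← h2, h3]
      _ = b * (x + 2 * r + 2 + M) * (x + 2 * r + 3 + M) := by ring
  -- A3 : (x+1) * pch (-x) (M+1) = a * (x + 1 - M) * (M - x)
  have A3 : (x + 1) * pch (-x) (M + 1) = a * (x + 1 - M) * ((M : ℚ) - x) := by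
    have h1 : pch (-(x + 1)) (M + 1) = -(x + 1) * pch (-x) M := by
      rw [pch_succ_left, show (-(x + 1) + 1 : ℚ) = -x from by ring]
    have h2 : pch (-(x + 1)) (M + 1) = a * ((M : ℚ) - x - 1) := by
      rw [pch_succ, ha]; all_goals ring
    have h3 : pch (-x) (M + 1) = pch (-x) M * ((M : ℚ) - x) := by rw [pch_succ]; ring
    have h4 : -(x + 1) * pch (-x) M = a * ((M : ℚ) - x - 1) := by rw [← h1, h2]
    rw [h3]
    linear_combination (-((M : ℚ) - x)) * h4
  -- A4 : pch (x+2r+1) (M+1) = (x+2r+1) * b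
  have A4 : pch (x + 2 * r + 1) (M + 1) = (x + 2 * r + 1) * b := by
    rw [pch_succ_left, show (x + 2 * r + 1 + 1 : ℚ) = x + 2 * r + 2 from by ring, hb]
  -- A5 : pch (-(x+1)) (M+1) = a * (M - x - 1)
  have A5 : pch (-(x + 1)) (M + 1) = a * ((M : ℚ) - x - 1) := by
    rw [pch_succ, ha]; all_goals ring
  -- A6 : pch ((x+1)+2r+1) (M+1) = b * (x+2r+2+M)
  have A6 : pch ((x + 1) + 2 * r + 1) (M + 1) = b * (x + 2 * r + 2 + M) := by
    rw [show ((x + 1) + 2 * r + 1 : ℚ) = x + 2 * r + 2 from by ring, pch_succ, hb]; all_goals ring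
  -- A7 : pch ((x+1)+2r+1) M = b
  have A7 : pch ((x + 1) + 2 * r + 1) M = b := by
    rw [show ((x + 1) + 2 * r + 1 : ℚ) = x + 2 * r + 2 from by ring, hb]; all_goals ring
  -- denominators
  have D1 : pch ((r : ℚ) + 1) (M + 1) = pch ((r : ℚ) + 1) M * ((r : ℚ) + 1 + M) := by
    rw [pch_succ]; all_goals ring
  have D2 : ((M + 1).factorial : ℚ) = ((M : ℚ) + 1) * (M.factorial : ℚ) := by
    rw [Nat.factorial_succ]; push_cast; ring
  have hpch : pch ((r : ℚ) + 1) M ≠ 0 := pch_ne_zero (by positivity) M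
  have hfac : (M.factorial : ℚ) ≠ 0 := by positivity
  have h2M : (2 : ℚ) ^ M ≠ 0 := by positivity
  have hrM : ((r : ℚ) + 1 + M) ≠ 0 := by positivity
  have hM1 : ((M : ℚ) + 1) ≠ 0 := by positivity
  unfold FF
  have A2' : pch ((x + 2) + 2 * r + 1) (M + 1)
      = b * (x + 2 * r + 2 + M) * (x + 2 * r + 3 + M) / (x + 2 * r + 2) := by
    rw [eq_div_iff hx2]; linear_combination A2
  have A3' : pch (-x) (M + 1) = a * (x + 1 - M) * ((M : ℚ) - x) / (x + 1) := by
    rw [eq_div_iff hx1]; linear_combination A3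
  simp only [A1, A5, A6, A7, D1, D2, A2', A3', A4, ha, hb]
  field_simp
  ring
noncomputable def Gs (ν r : ℕ) : ℚ := ∑ N ∈ range (ν + 1), FF r (ν : ℚ) N

lemma FF_vanish (r : ℕ) (x : ℚ) (m N : ℕ) (hx : x = (m : ℚ)) (h : m < N) : FF r x N = 0 := by
  unfold FF
  rw [hx, pch_neg_nat m N h]
  simp

lemma G_rec (m r : ℕ) :
    ((m : ℚ) + 2 * r + 2) * Gs (m + 2) r + ((m : ℚ) + 1) * Gs m r = 0 := by
  have hx1 : (m : ℚ) + 1 ≠ 0 := by positivity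
  have hx2 : (m : ℚ) + 2 * r + 2 ≠ 0 := by positivity
  have e2 : Gs (m + 2) r = ∑ N ∈ range (m + 3), FF r ((m : ℚ) + 2) N := by
    unfold Gs
    have : ((m + 2 : ℕ) : ℚ) = (m : ℚ) + 2 := by push_cast; ring
    rw [this]
  have e0 : Gs m r = ∑ N ∈ range (m + 3), FF r ((m : ℚ)) N := by
    unfold Gs
    apply Finset.sum_subset
    · exact Finset.range_subset_range.mpr (by omega)
    · intro N _ hN
      exact FF_vanish r _ m N rfl (by simp only [Finset.mem_range] at hN ⊢; omega)
  have key : ∑ N ∈ range (m + 3),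
      (((m : ℚ) + 2 * r + 2) * FF r ((m : ℚ) + 2) N + ((m : ℚ) + 1) * FF r (m : ℚ) N) = 0 := by
    rw [Finset.sum_range_succ']
    have tele : ∑ N ∈ range (m + 2),
        (((m : ℚ) + 2 * r + 2) * FF r ((m : ℚ) + 2) (N + 1) + ((m : ℚ) + 1) * FF r (m : ℚ) (N + 1))
        = ∑ N ∈ range (m + 2),
          ((2 * (m : ℚ) + 2 * r + 3) * FF r ((m : ℚ) + 1) (N + 1)
            - (2 * (m : ℚ) + 2 * r + 3) * FF r ((m : ℚ) + 1) N) := by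
      apply Finset.sum_congr rfl
      intro N _
      have := key_rec r (m : ℚ) hx1 hx2 N
      linarith [this]
    rw [tele, Finset.sum_range_sub (fun N => (2 * (m : ℚ) + 2 * r + 3) * FF r ((m : ℚ) + 1) N)]
    have hv : FF r ((m : ℚ) + 1) (m + 2) = 0 := by
      apply FF_vanish r _ (m + 1) (m + 2) (by push_cast; ring) (by omega)
    rw [hv, FF_zero, FF_zero, FF_zero]
    ring
  rw [e2, e0, Finset.mul_sum, Finset.mul_sum, ← Finset.sum_add_distrib]
  exact key

lemma G_even : ∀ J r : ℕ, Gs (2 * J) r = (-1) ^ J * pch 2⁻¹ J / pch ((r : ℚ) + 1) J := by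
  intro J
  induction J with
  | zero =>
      intro r
      simp [Gs, FF_zero, pch]
  | succ J ih =>
      intro r
      have hrec := G_rec (2 * J) r
      have h2 : (2 * (J + 1)) = (2 * J) + 2 := by ring
      have hx2 : ((2 * J : ℕ) : ℚ) + 2 * r + 2 ≠ 0 := by positivity
      rw [h2]
      have : Gs (2 * J + 2) r = -(((2 * J : ℕ) : ℚ) + 1) * Gs (2 * J) r / (((2 * J : ℕ) : ℚ) + 2 * r + 2) := by
        rw [eq_div_iff hx2]; linarith [hrec]
      rw [this, ih r]
      have hp1 : pch ((r : ℚ) + 1) (J + 1) = pch ((r : ℚ) + 1) J * ((r : ℚ) + 1 + J) := pch_succ _ _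
      have hp2 : pch (2⁻¹ : ℚ) (J + 1) = pch (2⁻¹ : ℚ) J * (2⁻¹ + J) := pch_succ _ _
      rw [hp1, hp2]
      have hne1 : pch ((r : ℚ) + 1) J ≠ 0 := pch_ne_zero (by positivity) J
      have hne2 : ((r : ℚ) + 1 + J) ≠ 0 := by positivity
      push_cast
      field_simp
      ring

lemma G_odd : ∀ J r : ℕ, Gs (2 * J + 1) r = 0 := by
  intro J
  induction J with
  | zero =>
      intro r
      have h1 : Gs 1 r = FF r 1 0 + FF r 1 1 := by
        unfold Gs
        rw [Finset.sum_range_succ, Finset.sum_range_succ, Finset.sum_range_zero]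
        norm_num
      rw [h1, FF_zero]
      unfold FF
      have hr1 : ((r : ℚ) + 1) ≠ 0 := by positivity
      simp [pch]
      field_simp
      ring
  | succ J ih =>
      intro r
      have hrec := G_rec (2 * J + 1) r
      have h2 : (2 * (J + 1) + 1) = (2 * J + 1) + 2 := by ring
      have hx2 : ((2 * J + 1 : ℕ) : ℚ) + 2 * r + 2 ≠ 0 := by positivity
      rw [h2]
      have hzero := ih r
      have : (((2 * J + 1 : ℕ) : ℚ) + 2 * r + 2) * Gs (2 * J + 1 + 2) r = 0 := by
        rw [hzero] at hrec
        linarith [hrec]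
      exact (mul_eq_zero.mp this).resolve_left hx2
lemma choose_cast (k : ℕ) :
    ((2 * k).choose k : ℚ) = ((2 * k).factorial : ℚ) / ((k.factorial : ℚ) * (k.factorial : ℚ)) := by
  have h := Nat.choose_mul_factorial_mul_factorial (show k ≤ 2 * k by omega)
  have h2 : 2 * k - k = k := by omega
  rw [h2] at h
  have hk : (k.factorial : ℚ) ≠ 0 := by positivity
  field_simp
  push_cast [← h]
  ring

lemma prod_fall (k r : ℕ) (h : r ≤ k) :
    ∏ i ∈ range r, ((k : ℚ) - i) = (k.factorial : ℚ) / ((k - r).factorial : ℚ) := by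
  induction r with
  | zero =>
      have : (k.factorial : ℚ) ≠ 0 := by positivity
      simp [div_self this]
  | succ s ih =>
      rw [Finset.prod_range_succ, ih (by omega)]
      have h1 : k - s = (k - (s + 1)) + 1 := by omega
      have h2 : ((k - s).factorial : ℚ) = ((k : ℚ) - s) * ((k - (s + 1)).factorial : ℚ) := by
        rw [h1, Nat.factorial_succ]
        have : ((k - (s + 1) : ℕ) : ℚ) = (k : ℚ) - (s + 1) := by
          push_cast [Nat.cast_sub (show s + 1 ≤ k from h)]
          ring
        push_cast [this]
        ring
      rw [h2]
      have hne1 : ((k - (s + 1)).factorial : ℚ) ≠ 0 := by positivity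
      have hne2 : ((k : ℚ) - s) ≠ 0 := by
        have : ((k - s : ℕ) : ℚ) = (k : ℚ) - s := by
          push_cast [Nat.cast_sub (show s ≤ k by omega)]
          ring
        rw [← this]
        have : 0 < k - s := by omega
        positivity
      field_simp

lemma pow32 (k : ℕ) : (32 : ℚ) ^ k = 2 ^ k * (4 ^ k * 4 ^ k) := by
  rw [← mul_pow, ← mul_pow]
  norm_num

lemma term_eq (k r : ℕ) (h : r ≤ k) :
    ((2 * k).choose k : ℚ) ^ 2 / 32 ^ k * ∏ i ∈ range r, ((k : ℚ) - i)
    = pch 2⁻¹ k ^ 2 / (2 ^ k * (k.factorial : ℚ) * ((k - r).factorial : ℚ)) := by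
  rw [choose_cast, prod_fall k r h, pch_half, pow32]
  have h1 : (k.factorial : ℚ) ≠ 0 := by positivity
  have h2 : ((2 * k).factorial : ℚ) ≠ 0 := by positivity
  have h3 : ((k - r).factorial : ℚ) ≠ 0 := by positivity
  have h4 : (2 : ℚ) ^ k ≠ 0 := by positivity
  have h5 : (4 : ℚ) ^ k ≠ 0 := by positivity
  field_simp

lemma term_shift (N r : ℕ) :
    pch 2⁻¹ (r + N) ^ 2 / (2 ^ (r + N) * ((r + N).factorial : ℚ) * (((r + N) - r).factorial : ℚ))
    = (pch 2⁻¹ r ^ 2 / (2 ^ r * (r.factorial : ℚ)))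
      * (pch (2⁻¹ + r) N ^ 2 / (pch ((r : ℚ) + 1) N * (N.factorial : ℚ) * 2 ^ N)) := by
  have e1 : pch 2⁻¹ (r + N) = pch 2⁻¹ r * pch (2⁻¹ + r) N := pch_add _ _ _
  have e2 : ((r + N).factorial : ℚ) = pch ((r : ℚ) + 1) N * (r.factorial : ℚ) := by
    rw [pch_nat_factorial]
    have : (r.factorial : ℚ) ≠ 0 := by positivity
    field_simp
  have e3 : (r + N) - r = N := by omega
  have e4 : (2 : ℚ) ^ (r + N) = 2 ^ r * 2 ^ N := pow_add 2 r N
  rw [e1, e2, e3, e4]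
  have h1 : (r.factorial : ℚ) ≠ 0 := by positivity
  have h2 : (N.factorial : ℚ) ≠ 0 := by positivity
  have h3 : pch ((r : ℚ) + 1) N ≠ 0 := pch_ne_zero (by positivity) N
  have h4 : (2 : ℚ) ^ r ≠ 0 := by positivity
  have h5 : (2 : ℚ) ^ N ≠ 0 := by positivity
  field_simp
lemma main_decomp (p n r : ℕ) (hp : p.Prime) (hodd : p ≠ 2) (hp2 : p = 2 * n + 1)
    (hrn : r ≤ n) :
    ∃ Q : ℚ, IsG p Q ∧
      (∑ k ∈ range (n + 1), ((2 * k).choose k : ℚ) ^ 2 / 32 ^ k * ∏ i ∈ range r, ((k : ℚ) - i))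
      = (pch 2⁻¹ r ^ 2 / (2 ^ r * (r.factorial : ℚ))) * Gs (n - r) r + (p : ℚ) ^ 2 * Q := by
  have hnp : n < p := by omega
  set ν := n - r with hν
  -- congruence core per N
  have hcast1 : -((ν : ℕ) : ℚ) + (p : ℚ) / 2 = 2⁻¹ + r := by
    rw [hν, Nat.cast_sub hrn, hp2]
    push_cast
    ring
  have hcast2 : -((ν : ℕ) : ℚ) + 2 * ((p : ℚ) / 2) = (ν : ℚ) + 2 * r + 1 := by
    rw [hν, Nat.cast_sub hrn, hp2]
    push_cast
    ring
  have hDq : ∀ N : ℕ, ∃ q : ℚ, Dy q ∧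
      pch (2⁻¹ + r) N ^ 2 - pch (-((ν : ℕ) : ℚ)) N * pch ((ν : ℚ) + 2 * r + 1) N
        = (p : ℚ) ^ 2 * q := by
    intro N
    have hDc : Dy (-((ν : ℕ) : ℚ)) := Dy_neg (Dy_nat ν)
    have hDy2 : Dy ((p : ℚ) / 2) := Dy_half (Dy_nat p)
    obtain ⟨q, hq, he⟩ := Dlemma hDc hDy2 N
    rw [hcast1, hcast2] at he
    refine ⟨q, hq, ?_⟩
    rw [he]
    ring
  choose qf hqDy hqEq using hDq
  -- split sum
  have hsplit : n + 1 = r + (ν + 1) := by omega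
  refine ⟨∑ N ∈ range (ν + 1),
      (pch 2⁻¹ r ^ 2 / (2 ^ r * (r.factorial : ℚ))) * qf N
        / (pch ((r : ℚ) + 1) N * (N.factorial : ℚ) * 2 ^ N), ?_, ?_⟩
  · -- IsG of Q
    apply Finset.sum_induction _ _ (fun a b => IsG_add hp) (IsG_zero hp)
    intro N hN
    have hNν : N ≤ ν := by simp only [Finset.mem_range] at hN; omega
    have hP : IsG p (pch 2⁻¹ r ^ 2 / (2 ^ r * (r.factorial : ℚ))) := by
      have hd : Dy (pch 2⁻¹ r ^ 2) := by
        have := Dy_mul (Dy_pch (⟨1, 1, by norm_num⟩ : Dy 2⁻¹) r) (Dy_pch (⟨1, 1, by norm_num⟩ : Dy 2⁻¹) r)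
        simpa [sq] using this
      have : pch 2⁻¹ r ^ 2 / (2 ^ r * (r.factorial : ℚ))
          = pch 2⁻¹ r ^ 2 * ((2 : ℚ) ^ r)⁻¹ * ((r.factorial : ℚ))⁻¹ := by
        field_simp
      rw [this]
      exact IsG_mul hp (IsG_mul hp (IsG_of_Dy hp hodd hd) (IsG_inv_pow2 hp hodd r))
        (IsG_inv_factorial hp (by omega))
    have hinvp : IsG p (pch ((r : ℚ) + 1) N)⁻¹ := by
      have : (pch ((r : ℚ) + 1) N)⁻¹ = (r.factorial : ℚ) * (((r + N).factorial : ℚ))⁻¹ := by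
        rw [pch_nat_factorial]
        have h1 : (r.factorial : ℚ) ≠ 0 := by positivity
        have h2 : ((r + N).factorial : ℚ) ≠ 0 := by positivity
        field_simp
      rw [this]
      exact IsG_mul hp (by exact_mod_cast IsG_int hp (r.factorial : ℤ))
        (IsG_inv_factorial hp (by omega))
    have : (pch 2⁻¹ r ^ 2 / (2 ^ r * (r.factorial : ℚ))) * qf N
        / (pch ((r : ℚ) + 1) N * (N.factorial : ℚ) * 2 ^ N)
        = (pch 2⁻¹ r ^ 2 / (2 ^ r * (r.factorial : ℚ))) * qf N
          * (pch ((r : ℚ) + 1) N)⁻¹ * ((N.factorial : ℚ))⁻¹ * ((2 : ℚ) ^ N)⁻¹ := by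
      field_simp
    rw [this]
    exact IsG_mul hp (IsG_mul hp (IsG_mul hp (IsG_mul hp hP (IsG_of_Dy hp hodd (hqDy N)))
      hinvp) (IsG_inv_factorial hp (by omega))) (IsG_inv_pow2 hp hodd N)
  · -- the sum identity
    rw [hsplit, Finset.sum_range_add]
    have hz : ∀ k ∈ range r, ((2 * k).choose k : ℚ) ^ 2 / 32 ^ k * ∏ i ∈ range r, ((k : ℚ) - i) = 0 := by
      intro k hk
      have : ∏ i ∈ range r, ((k : ℚ) - i) = 0 :=
        Finset.prod_eq_zero hk (by ring)
      rw [this, mul_zero]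
    rw [Finset.sum_congr rfl hz, Finset.sum_const_zero, zero_add]
    have hterm : ∀ N ∈ range (ν + 1),
        ((2 * (r + N)).choose (r + N) : ℚ) ^ 2 / 32 ^ (r + N) * ∏ i ∈ range r, (((r + N : ℕ) : ℚ) - i)
        = (pch 2⁻¹ r ^ 2 / (2 ^ r * (r.factorial : ℚ))) * FF r (ν : ℚ) N
          + (p : ℚ) ^ 2 * ((pch 2⁻¹ r ^ 2 / (2 ^ r * (r.factorial : ℚ))) * qf N
            / (pch ((r : ℚ) + 1) N * (N.factorial : ℚ) * 2 ^ N)) := by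
      intro N hN
      rw [term_eq (r + N) r (by omega), term_shift N r]
      have hsq : pch (2⁻¹ + r) N ^ 2
          = pch (-((ν : ℕ) : ℚ)) N * pch ((ν : ℚ) + 2 * r + 1) N + (p : ℚ) ^ 2 * qf N := by
        have := hqEq N
        linarith [this]
      rw [hsq]
      unfold FF
      have h1 : pch ((r : ℚ) + 1) N ≠ 0 := pch_ne_zero (by positivity) N
      have h2 : (N.factorial : ℚ) ≠ 0 := by positivity
      have h3 : (2 : ℚ) ^ N ≠ 0 := by positivity
      have h4 : (r.factorial : ℚ) ≠ 0 := by positivity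
      have h5 : (2 : ℚ) ^ r ≠ 0 := by positivity
      field_simp
    rw [Finset.sum_congr rfl hterm, Finset.sum_add_distrib, ← Finset.mul_sum, ← Finset.mul_sum]
    rfl
lemma fact_two_mul (s : ℕ) :
    ((2 * s).factorial : ℤ) = 2 ^ s * (s.factorial : ℤ) * ∏ i ∈ range s, (2 * (i : ℤ) + 1) := by
  induction s with
  | zero => simp
  | succ s ih =>
      have h1 : 2 * (s + 1) = (2 * s + 1) + 1 := by ring
      rw [h1, Nat.factorial_succ, Nat.factorial_succ, Finset.prod_range_succ, Nat.factorial_succ]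
      push_cast
      rw [ih]
      push_cast
      ring

lemma fact_add_prod (a b : ℕ) :
    ((a + b).factorial : ℤ) = (a.factorial : ℤ) * ∏ i ∈ range b, ((a : ℤ) + i + 1) := by
  induction b with
  | zero => simp
  | succ b ih =>
      have h1 : a + (b + 1) = (a + b) + 1 := by ring
      rw [h1, Nat.factorial_succ, Finset.prod_range_succ]
      push_cast
      rw [ih]
      push_cast
      ring

lemma prod_shift_sq (P : ℤ) (s : ℕ) :
    ∃ t : ℤ, ∏ i ∈ range (2 * s), (P + (2 * (i : ℤ) + 1) - 2 * s)
      = (-1) ^ s * (∏ i ∈ range s, (2 * (i : ℤ) + 1)) ^ 2 + P ^ 2 * t := by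
  induction s with
  | zero => exact ⟨0, by simp⟩
  | succ s ih =>
      obtain ⟨t, ht⟩ := ih
      refine ⟨(-1) ^ s * (∏ i ∈ range s, (2 * (i : ℤ) + 1)) ^ 2 + (P ^ 2 - (2 * s + 1) ^ 2) * t, ?_⟩
      have h1 : 2 * (s + 1) = (2 * s + 1) + 1 := by ring
      rw [h1, Finset.prod_range_succ, Finset.prod_range_succ']
      have h3 : ∏ i ∈ range (2 * s), (P + (2 * ((i + 1 : ℕ) : ℤ) + 1) - 2 * ((s + 1 : ℕ) : ℤ))
          = ∏ i ∈ range (2 * s), (P + (2 * (i : ℤ) + 1) - 2 * (s : ℤ)) :=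
        Finset.prod_congr rfl (fun i _ => by push_cast; ring)
      rw [h3, ht, Finset.prod_range_succ]
      push_cast
      ring

lemma int_key (p J r : ℕ) (hp4 : (p : ℤ) = 4 * J + 2 * r + 1) :
    ∃ t : ℤ, (-1) ^ r * 16 ^ r * (r.factorial : ℤ) ^ 2 * ((2 * J + 2 * r).factorial : ℤ)
      - ((2 * r).factorial : ℤ) ^ 2 * ((2 * J).factorial : ℤ) = (p : ℤ) ^ 2 * t := by
  obtain ⟨t, ht⟩ := prod_shift_sq (p : ℤ) r
  refine ⟨(-1) ^ r * 4 ^ r * (r.factorial : ℤ) ^ 2 * ((2 * J).factorial : ℤ) * t, ?_⟩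
  have e1 : ((2 * J + 2 * r).factorial : ℤ)
      = ((2 * J).factorial : ℤ) * ∏ i ∈ range (2 * r), ((2 * J : ℤ) + i + 1) := by
    have := fact_add_prod (2 * J) (2 * r)
    push_cast at this ⊢
    linarith [this]
  have e3 : (2 : ℤ) ^ (2 * r) * ∏ i ∈ range (2 * r), ((2 * J : ℤ) + i + 1)
      = ∏ i ∈ range (2 * r), ((p : ℤ) + (2 * (i : ℤ) + 1) - 2 * r) := by
    calc (2 : ℤ) ^ (2 * r) * ∏ i ∈ range (2 * r), ((2 * J : ℤ) + i + 1)
        = ∏ i ∈ range (2 * r), (2 * ((2 * J : ℤ) + i + 1)) := by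
          rw [Finset.prod_mul_distrib, Finset.prod_const, Finset.card_range]
      _ = ∏ i ∈ range (2 * r), ((p : ℤ) + (2 * (i : ℤ) + 1) - 2 * r) := by
          apply Finset.prod_congr rfl
          intro i _
          rw [hp4]
          push_cast
          ring
  have e4 : ((2 * r).factorial : ℤ)
      = 2 ^ r * (r.factorial : ℤ) * ∏ i ∈ range r, (2 * (i : ℤ) + 1) := fact_two_mul r
  have hsign : ((-1 : ℤ) ^ r) ^ 2 = 1 := by
    rw [← pow_mul, mul_comm, pow_mul]
    norm_num
  have e16 : (16 : ℤ) ^ r = 4 ^ r * 2 ^ (2 * r) := by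
    rw [pow_mul]
    rw [show ((2:ℤ)^2 : ℤ) = 4 from by norm_num, ← mul_pow]
    norm_num
  have e4r : (4 : ℤ) ^ r = 2 ^ r * 2 ^ r := by
    rw [← mul_pow]; norm_num
  rw [e1, e4, e16, e4r]
  rw [ht] at e3
  linear_combination ((-1 : ℤ) ^ r * 2 ^ r * 2 ^ r * (r.factorial : ℤ) ^ 2 * ((2 * J).factorial : ℤ)) * e3
    + ((∏ i ∈ range r, (2 * (i : ℤ) + 1)) ^ 2 * (r.factorial : ℤ) ^ 2 * ((2 * J).factorial : ℤ) * 2 ^ r * 2 ^ r) * hsign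
lemma endgame (p n r J : ℕ) (hp : p.Prime) (hodd : p ≠ 2)
    (hpJ : (p : ℤ) = 4 * J + 2 * r + 1) (hn : n = 2 * J + r) :
    ∃ QQ : ℚ, IsG p QQ ∧
      (pch 2⁻¹ r ^ 2 / (2 ^ r * (r.factorial : ℚ)))
          * ((-1) ^ J * pch 2⁻¹ J / pch ((r : ℚ) + 1) J)
        - ((-1 : ℚ) ^ (J + r) * ((2 : ℚ) ^ n)⁻¹ * ((n + r).factorial : ℚ)
            / ((J.factorial : ℚ) * ((J + r).factorial : ℚ)))
      = (p : ℚ) ^ 2 * QQ := by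
  obtain ⟨t, ht⟩ := int_key p J r hpJ
  have hrp : r < p := by omega
  have hJp : J < p := by omega
  have hJrp : J + r < p := by omega
  refine ⟨(-1) ^ (J + 1) * (t : ℚ) * ((2 : ℚ) ^ (5 * r + 2 * J))⁻¹
          * ((r.factorial : ℚ))⁻¹ * ((r.factorial : ℚ))⁻¹
          * ((J.factorial : ℚ))⁻¹ * (((J + r).factorial : ℚ))⁻¹, ?_, ?_⟩
  · refine IsG_mul hp (IsG_mul hp (IsG_mul hp (IsG_mul hp (IsG_mul hp (IsG_mul hp ?_ ?_) ?_) ?_) ?_) ?_) ?_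
    · exact IsG_of_Dy hp hodd ⟨(-1) ^ (J + 1), 0, by push_cast; norm_num⟩
    · exact IsG_int hp t
    · exact IsG_inv_pow2 hp hodd _
    · exact IsG_inv_factorial hp hrp
    · exact IsG_inv_factorial hp hrp
    · exact IsG_inv_factorial hp hJp
    · exact IsG_inv_factorial hp hJrp
  · -- main equation
    have e1 : pch (2⁻¹ : ℚ) r = ((2 * r).factorial : ℚ) / (4 ^ r * r.factorial) := pch_half r
    have e2 : pch (2⁻¹ : ℚ) J = ((2 * J).factorial : ℚ) / (4 ^ J * J.factorial) := pch_half J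
    have e3 : pch ((r : ℚ) + 1) J = ((r + J).factorial : ℚ) / (r.factorial : ℚ) :=
      pch_nat_factorial r J
    have e4 : n + r = 2 * J + 2 * r := by omega
    have e5 : (r + J).factorial = (J + r).factorial := by rw [Nat.add_comm]
    rw [e1, e2, e3, e4, e5, hn]
    -- cast of ht
    have htQ : (-1 : ℚ) ^ r * 16 ^ r * (r.factorial : ℚ) ^ 2 * ((2 * J + 2 * r).factorial : ℚ)
        - ((2 * r).factorial : ℚ) ^ 2 * ((2 * J).factorial : ℚ) = (p : ℚ) ^ 2 * (t : ℚ) := by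
      exact_mod_cast congrArg (fun z : ℤ => (z : ℚ)) ht
    -- all powers to base 2
    have p16 : (16 : ℚ) ^ r = 2 ^ (4 * r) := by
      rw [pow_mul]; norm_num
    have p4r : (4 : ℚ) ^ r = 2 ^ (2 * r) := by
      rw [pow_mul]; norm_num
    have p4J : (4 : ℚ) ^ J = 2 ^ (2 * J) := by
      rw [pow_mul]; norm_num
    rw [p16] at htQ
    rw [p4r, p4J]
    have hsign : ((-1 : ℚ) ^ r) * ((-1 : ℚ) ^ r) = 1 := by
      rw [← pow_add]
      rw [show r + r = 2 * r from by ring, pow_mul]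
      norm_num
    have hmm : ((-1 : ℚ) ^ (J + r)) = (-1) ^ J * (-1) ^ r := by rw [pow_add]
    have hf1 : (r.factorial : ℚ) ≠ 0 := by positivity
    have hf2 : (J.factorial : ℚ) ≠ 0 := by positivity
    have hf3 : ((J + r).factorial : ℚ) ≠ 0 := by positivity
    have hf4 : ((2 * r).factorial : ℚ) ≠ 0 := by positivity
    have hf5 : ((2 * J).factorial : ℚ) ≠ 0 := by positivity
    have hpw : ∀ m : ℕ, (2 : ℚ) ^ m ≠ 0 := fun m => by positivity
    rw [hmm]
    field_simp
    linear_combination ((-1 : ℚ) ^ (J + 1) * (2 : ℚ) ^ (5 * r + 2 * J) * (2 : ℚ) ^ (2 * J + r)) * htQ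
theorem stmt7 (p : ℕ) (hp : p.Prime) (hodd : p ≠ 2) (r : ℕ) (hr1 : 1 ≤ r)
    (hr2 : r ≤ (p - 1) / 2) :
    ((p + 1 - 2 * r) % 4 = 0 →
      ratCongr p 2
        (∑ k ∈ Finset.range ((p - 1) / 2 + 1),
          ((2 * k).choose k : ℚ) ^ 2 / 32 ^ k * ∏ i ∈ Finset.range r, ((k : ℚ) - i)) 0) ∧
    ((p - 1 - 2 * r) % 4 = 0 →
      ratCongr p 2
        (∑ k ∈ Finset.range ((p - 1) / 2 + 1),
          ((2 * k).choose k : ℚ) ^ 2 / 32 ^ k * ∏ i ∈ Finset.range r, ((k : ℚ) - i))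
        ((-1 : ℚ) ^ ((p - 1 + 2 * r) / 4) * ((2 : ℚ) ^ ((p - 1) / 2))⁻¹ *
          (((p - 1) / 2 + r).factorial : ℚ) /
            ((((p - 1 - 2 * r) / 4).factorial : ℚ) * (((p - 1 + 2 * r) / 4).factorial : ℚ)))) := by
  obtain ⟨n, hn⟩ := hp.odd_of_ne_two hodd
  have hpn : (p - 1) / 2 = n := by omega
  have hrn : r ≤ n := by omega
  have hp2 : p = 2 * n + 1 := by omega
  obtain ⟨Q, hQ, hsum⟩ := main_decomp p n r hp hodd hp2 hrn
  rw [hpn]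
  constructor
  · intro h1
    obtain ⟨J, hJ⟩ : ∃ J, n - r = 2 * J + 1 := ⟨(n - r) / 2, by omega⟩
    refine ⟨Q, ?_, IsG_den hQ⟩
    rw [sub_zero, hsum, hJ, G_odd J r]
    ring
  · intro h2
    obtain ⟨J, hJ⟩ : ∃ J, n - r = 2 * J := ⟨(n - r) / 2, by omega⟩
    have hi1 : (p - 1 + 2 * r) / 4 = J + r := by omega
    have hi2 : (p - 1 - 2 * r) / 4 = J := by omega
    obtain ⟨QQ, hQQ, hend⟩ := endgame p n r J hp hodd (by push_cast; omega) (by omega)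
    refine ⟨Q + QQ, ?_, IsG_den (IsG_add hp hQ hQQ)⟩
    rw [hi1, hi2, hsum, hJ, G_even J r]
    linear_combination hend
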